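/- Let φ(x,y) = sin x · sin y and u₀(x,y) = sin²x + sin²y. Suppose u : ℝ² → ℝ is continuous on the closed square [0,π] × [0,π], twice continuously differentiable on the open square (0,π) × (0,π), satisfies −(1/2)·(∂²u/∂x² + ∂²u/∂y²) + (1/(2·φ))·((∂φ/∂x)·(∂u/∂x) + (∂φ/∂y)·(∂u/∂y)) = u on (0,π) × (0,π), vanishes on the boundary of [0,π] × [0,π], and is such that the quotient u/u₀ extends to a continuous function on [0,π] × [0,π] that vanishes on the boundary. Then u is identically zero on [0,π] × [0,π]. -/

import Mathlib

open Real Set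

/-- First coordinate partial derivative of a function on `ℝ²`. -/
noncomputable def pdX (f : ℝ × ℝ → ℝ) (p : ℝ × ℝ) : ℝ := deriv (fun t => f (t, p.2)) p.1

/-- Second coordinate partial derivative of a function on `ℝ²`. -/
noncomputable def pdY (f : ℝ × ℝ → ℝ) (p : ℝ × ℝ) : ℝ := deriv (fun t => f (p.1, t)) p.2

/-- Euclidean Laplacian on `ℝ²` via coordinate partial derivatives. -/
noncomputable def lap (f : ℝ × ℝ → ℝ) (p : ℝ × ℝ) : ℝ := pdX (pdX f) p + pdY (pdY f) p

open Filter Topology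

/-! ### Auxiliary polynomial inequalities -/

lemma hDlem (t : ℝ) (ht : 3/10 < t) (ht1 : t ≤ 1) :
    (1-t)^2 * (10*t^3 + 5*t^2 - 4*t - 3) - 4*t^2 < 0 := by
  have h0 : (0:ℝ) < t := by linarith
  have key : (1-t)^2 * (10*t^3 + 5*t^2 - 4*t - 3) - 4*t^2
      = -(10*t^4*(1-t) + (5*t^4+4*t^3-6*t^2-2*t+3)) := by ring
  have h1 : 0 ≤ 10*t^4*(1-t) := by
    have : 0 ≤ 1 - t := by linarith
    positivity
  have h2 : 0 < 5*t^4+4*t^3-6*t^2-2*t+3 := by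
    nlinarith [sq_nonneg (t-1/2), sq_nonneg t, mul_nonneg h0.le (sub_nonneg.2 ht1),
      sq_nonneg (t^2-t), mul_nonneg (mul_nonneg h0.le h0.le) (sub_nonneg.2 ht1),
      sq_nonneg (t^2+t-1)]
  rw [key]; linarith

lemma keyPoly (a b : ℝ) (ha : 0 < a) (hb : 0 < b) (ha1 : a ≤ 1) (hb1 : b ≤ 1) :
    -3*b^4 - 8*a*b^3 + 18*a^2*b^2 - 8*a^3*b - 3*a^4
      + 10*a*b^5 - 12*a^2*b^4 + 4*a^3*b^3 - 12*a^4*b^2 + 10*a^5*b < 0 := by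
  have hab : 0 < a*b := mul_pos ha hb
  have hid : -3*b^4 - 8*a*b^3 + 18*a^2*b^2 - 8*a^3*b - 3*a^4
      + 10*a*b^5 - 12*a^2*b^4 + 4*a^3*b^3 - 12*a^4*b^2 + 10*a^5*b
      = (a-b)^2*((a+b)^2*(10*(a*b)-3) - 12*(a*b)^2 - 8*(a*b)) - 4*(a*b)^2 := by ring
  rw [hid]
  rcases le_or_gt (10*(a*b)) 3 with hc | hc
  · nlinarith [sq_nonneg (a-b), sq_nonneg (a+b), mul_nonneg (sq_nonneg (a-b)) (sq_nonneg (a+b))]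
  · have hq : a + b ≤ 1 + a*b := by nlinarith [mul_nonneg (sub_nonneg.2 ha1) (sub_nonneg.2 hb1)]
    have hq0 : 0 < a + b := by linarith
    have hs : (a+b)^2 ≤ (1+a*b)^2 := by nlinarith
    have hK : (a+b)^2*(10*(a*b)-3) - 12*(a*b)^2 - 8*(a*b)
        ≤ 10*(a*b)^3 + 5*(a*b)^2 - 4*(a*b) - 3 := by
      nlinarith [mul_le_mul_of_nonneg_right hs (show (0:ℝ) ≤ 10*(a*b)-3 by linarith)]
    rcases le_or_gt ((a+b)^2*(10*(a*b)-3) - 12*(a*b)^2 - 8*(a*b)) 0 with hK0 | hK0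
    · nlinarith [mul_nonpos_of_nonneg_of_nonpos (sq_nonneg (a-b)) hK0]
    · have h1 : (a-b)^2 ≤ (1-a*b)^2 := by nlinarith [sq_nonneg (a-b)]
      have h2 : (a-b)^2*((a+b)^2*(10*(a*b)-3) - 12*(a*b)^2 - 8*(a*b))
          ≤ (1-a*b)^2 * (10*(a*b)^3 + 5*(a*b)^2 - 4*(a*b) - 3) :=
        le_trans (mul_le_mul_of_nonneg_right h1 hK0.le)
          (mul_le_mul_of_nonneg_left hK (sq_nonneg _))
      have hab1 : a*b ≤ 1 := by nlinarith
      have hD := hDlem (a*b) (by linarith) hab1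
      linarith

lemma keyIneq (sx cx sy cy : ℝ) (hsx : 0 < sx) (hsy : 0 < sy) (hsx1 : sx ≤ 1) (hsy1 : sy ≤ 1)
    (hpy1 : sx^2 + cx^2 = 1) (hpy2 : sy^2 + cy^2 = 1) :
    0 < 2*(sx*sy)*((sx^2+sy^2)^2 - 3*((sx^2+sy^2)*(sx*sy)))
      + (sx*sy)*((4*(cx^2-sx^2)*(sx^2+sy^2) + 8*sx^2*cx^2 + 3*sy*sx*(3*sx^2+sy^2) - 18*sy*sx*cx^2)
                + (4*(cy^2-sy^2)*(sy^2+sx^2) + 8*sy^2*cy^2 + 3*sx*sy*(3*sy^2+sx^2) - 18*sx*sy*cy^2))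
      - cx*sy*(4*sx*cx*(sx^2+sy^2) - 3*sy*cx*(3*sx^2+sy^2))
      - sx*cy*(4*sy*cy*(sy^2+sx^2) - 3*sx*cy*(3*sy^2+sx^2)) := by
  have hP := keyPoly sx sy hsx hsy hsx1 hsy1
  have hid : 2*(sx*sy)*((sx^2+sy^2)^2 - 3*((sx^2+sy^2)*(sx*sy)))
      + (sx*sy)*((4*(cx^2-sx^2)*(sx^2+sy^2) + 8*sx^2*cx^2 + 3*sy*sx*(3*sx^2+sy^2) - 18*sy*sx*cx^2)
                + (4*(cy^2-sy^2)*(sy^2+sx^2) + 8*sy^2*cy^2 + 3*sx*sy*(3*sy^2+sx^2) - 18*sx*sy*cy^2))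
      - cx*sy*(4*sx*cx*(sx^2+sy^2) - 3*sy*cx*(3*sx^2+sy^2))
      - sx*cy*(4*sy*cy*(sy^2+sx^2) - 3*sx*cy*(3*sy^2+sx^2))
      = 3*sy^4 + 8*sx*sy^3 - 18*sx^2*sy^2 + 8*sx^3*sy + 3*sx^4
        - 10*sx*sy^5 + 12*sx^2*sy^4 - 4*sx^3*sy^3 + 12*sx^4*sy^2 - 10*sx^5*sy := by
    linear_combination (3*sy^4 - 9*sx^2*sy^2 + 8*sx^3*sy) * hpy1
      + (8*sx*sy^3 - 9*sx^2*sy^2 + 3*sx^4) * hpy2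
  rw [hid]
  linarith

/-! ### One-dimensional second derivative test -/

lemma second_deriv_nonpos_of_isLocalMax {g : ℝ → ℝ} {x₀ : ℝ}
    (hmax : IsLocalMax g x₀)
    (hd : ∀ᶠ t in 𝓝 x₀, DifferentiableAt ℝ g t)
    (hd2 : DifferentiableAt ℝ (deriv g) x₀) :
    deriv (deriv g) x₀ ≤ 0 := by
  by_contra hpos
  push_neg at hpos
  have h0 : deriv g x₀ = 0 := hmax.deriv_eq_zero
  have hslope : Tendsto (slope (deriv g) x₀) (𝓝[≠] x₀) (𝓝 (deriv (deriv g) x₀)) :=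
    hasDerivAt_iff_tendsto_slope.1 hd2.hasDerivAt
  have hev : ∀ᶠ t in 𝓝[≠] x₀, 0 < slope (deriv g) x₀ t :=
    hslope.eventually (eventually_gt_nhds hpos)
  obtain ⟨ε₁, hε₁, h1⟩ := Metric.eventually_nhds_iff.1 (eventually_nhdsWithin_iff.1 hev)
  obtain ⟨ε₂, hε₂, h2⟩ := Metric.eventually_nhds_iff.1 hd
  obtain ⟨ε₃, hε₃, h3⟩ := Metric.eventually_nhds_iff.1 hmax
  set δ := min ε₁ (min ε₂ ε₃) with hδ
  have hδpos : 0 < δ := by positivity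
  have hmem : ∀ t ∈ Icc x₀ (x₀ + δ/2), dist t x₀ < δ := by
    intro t ht
    rw [Real.dist_eq, abs_lt]
    constructor <;> [linarith [ht.1]; linarith [ht.2]]
  have hmono : StrictMonoOn g (Icc x₀ (x₀ + δ/2)) := by
    apply strictMonoOn_of_deriv_pos (convex_Icc _ _)
    · intro t ht
      exact ((h2 (lt_of_lt_of_le (hmem t ht) (le_trans (min_le_right _ _) (min_le_left _ _)))).continuousAt).continuousWithinAt
    · intro t ht
      rw [interior_Icc] at ht
      have htne : t ≠ x₀ := ne_of_gt ht.1
      have hdist : dist t x₀ < ε₁ := lt_of_lt_of_le (hmem t ⟨ht.1.le, ht.2.le⟩) (min_le_left _ _)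
      have := h1 hdist (by simpa using htne)
      rw [slope_def_field, h0] at this
      have h4 : 0 < (deriv g t - 0) / (t - x₀) := by simpa [div_eq_iff] using this
      have h5 : 0 < t - x₀ := by linarith [ht.1]
      rcases div_pos_iff.1 h4 with ⟨h6, _⟩ | ⟨_, h7⟩
      · linarith
      · linarith
  have hlt : g x₀ < g (x₀ + δ/2) := by
    apply hmono (left_mem_Icc.2 (by linarith)) (right_mem_Icc.2 (by linarith))
    linarith
  have hle : g (x₀ + δ/2) ≤ g x₀ := by
    apply h3
    rw [Real.dist_eq, abs_lt]
    have hδε : δ ≤ ε₃ := le_trans (min_le_right _ _) (min_le_right _ _)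
    constructor
    · linarith
    · linarith
  linarith

/-! ### Slice derivative helpers -/

lemma sliceX_hasDerivAt {u : ℝ × ℝ → ℝ} {x y : ℝ} (hu : DifferentiableAt ℝ u (x, y)) :
    HasDerivAt (fun t => u (t, y)) (fderiv ℝ u (x, y) (1, 0)) x := by
  have hc : HasDerivAt (fun t : ℝ => (t, y)) ((1 : ℝ), (0 : ℝ)) x :=
    (hasDerivAt_id x).prodMk (hasDerivAt_const x y)
  exact hu.hasFDerivAt.comp_hasDerivAt x hc

lemma sliceY_hasDerivAt {u : ℝ × ℝ → ℝ} {x y : ℝ} (hu : DifferentiableAt ℝ u (x, y)) :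
    HasDerivAt (fun t => u (x, t)) (fderiv ℝ u (x, y) (0, 1)) y := by
  have hc : HasDerivAt (fun t : ℝ => (x, t)) ((0 : ℝ), (1 : ℝ)) y :=
    (hasDerivAt_const y x).prodMk (hasDerivAt_id y)
  exact hu.hasFDerivAt.comp_hasDerivAt y hc

lemma fderiv_slice_diffX {u : ℝ × ℝ → ℝ} {x y : ℝ}
    (hu : ContDiffAt ℝ 2 u (x, y)) :
    DifferentiableAt ℝ (fun t => fderiv ℝ u (t, y) (1, 0)) x := by
  have h1 : ContDiffAt ℝ 1 (fderiv ℝ u) (x, y) := hu.fderiv_right (by norm_num)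
  have h2 : DifferentiableAt ℝ (fderiv ℝ u) (x, y) := h1.differentiableAt (by norm_num)
  have hc : DifferentiableAt ℝ (fun t : ℝ => (t, y)) x :=
    differentiableAt_id.prodMk (differentiableAt_const y)
  exact (h2.comp x hc).clm_apply (differentiableAt_const _)

lemma fderiv_slice_diffY {u : ℝ × ℝ → ℝ} {x y : ℝ}
    (hu : ContDiffAt ℝ 2 u (x, y)) :
    DifferentiableAt ℝ (fun t => fderiv ℝ u (x, t) (0, 1)) y := by
  have h1 : ContDiffAt ℝ 1 (fderiv ℝ u) (x, y) := hu.fderiv_right (by norm_num)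
  have h2 : DifferentiableAt ℝ (fderiv ℝ u) (x, y) := h1.differentiableAt (by norm_num)
  have hc : DifferentiableAt ℝ (fun t : ℝ => (x, t)) y :=
    (differentiableAt_const x).prodMk differentiableAt_id
  exact (h2.comp y hc).clm_apply (differentiableAt_const _)

lemma u0X_hasDeriv (b t : ℝ) :
    HasDerivAt (fun s => Real.sin s ^ 2 + b) (2 * Real.sin t * Real.cos t) t := by
  have h := ((Real.hasDerivAt_sin t).fun_pow 2).add_const b
  exact h.congr_deriv (by ring)

lemma u0Y_hasDeriv (b t : ℝ) :
    HasDerivAt (fun s => b + Real.sin s ^ 2) (2 * Real.sin t * Real.cos t) t := by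
  have h := ((Real.hasDerivAt_sin t).fun_pow 2).const_add b
  exact h.congr_deriv (by ring)

lemma u0X'_hasDeriv (t : ℝ) :
    HasDerivAt (fun s => 2 * Real.sin s * Real.cos s)
      (2 * (Real.cos t ^ 2 - Real.sin t ^ 2)) t := by
  have h := (((Real.hasDerivAt_sin t).const_mul 2).fun_mul (Real.hasDerivAt_cos t))
  exact h.congr_deriv (by ring)

lemma HX_hasDeriv (b c t : ℝ) :
    HasDerivAt (fun s => (Real.sin s ^ 2 + b) ^ 2 - 3 * ((Real.sin s ^ 2 + b) * (Real.sin s * c)))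
      (4 * Real.sin t * Real.cos t * (Real.sin t ^ 2 + b)
        - 3 * c * Real.cos t * (3 * Real.sin t ^ 2 + b)) t := by
  have h1 := (u0X_hasDeriv b t).fun_pow 2
  have h2 := ((u0X_hasDeriv b t).fun_mul ((Real.hasDerivAt_sin t).mul_const c)).const_mul 3
  exact (h1.sub h2).congr_deriv (by ring)

lemma HY_hasDeriv (b c t : ℝ) :
    HasDerivAt (fun s => (b + Real.sin s ^ 2) ^ 2 - 3 * ((b + Real.sin s ^ 2) * (c * Real.sin s)))
      (4 * Real.sin t * Real.cos t * (Real.sin t ^ 2 + b)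
        - 3 * c * Real.cos t * (3 * Real.sin t ^ 2 + b)) t := by
  have h1 := (u0Y_hasDeriv b t).fun_pow 2
  have h2 := ((u0Y_hasDeriv b t).fun_mul ((Real.hasDerivAt_sin t).const_mul c)).const_mul 3
  exact (h1.sub h2).congr_deriv (by ring)

lemma HX'_hasDeriv (b c t : ℝ) :
    HasDerivAt (fun s => 4 * Real.sin s * Real.cos s * (Real.sin s ^ 2 + b)
        - 3 * c * Real.cos s * (3 * Real.sin s ^ 2 + b))
      (4 * (Real.cos t ^ 2 - Real.sin t ^ 2) * (Real.sin t ^ 2 + b)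
        + 8 * Real.sin t ^ 2 * Real.cos t ^ 2
        + 3 * c * Real.sin t * (3 * Real.sin t ^ 2 + b)
        - 18 * c * Real.sin t * Real.cos t ^ 2) t := by
  have h1 := (((Real.hasDerivAt_sin t).const_mul 4).fun_mul (Real.hasDerivAt_cos t)).fun_mul
    (u0X_hasDeriv b t)
  have h2 := (((Real.hasDerivAt_cos t).const_mul (3 * c)).fun_mul
    ((((Real.hasDerivAt_sin t).fun_pow 2).const_mul 3).add_const b))
  exact (h1.sub h2).congr_deriv (by ring)

/-! ### Slice functions of the comparison function -/

noncomputable def GXfun (u : ℝ × ℝ → ℝ) (m ε y : ℝ) : ℝ → ℝ := fun s =>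
  u (s, y) - m * (Real.sin s ^ 2 + Real.sin y ^ 2)
    + ε * ((Real.sin s ^ 2 + Real.sin y ^ 2) ^ 2
        - 3 * ((Real.sin s ^ 2 + Real.sin y ^ 2) * (Real.sin s * Real.sin y)))

noncomputable def GYfun (u : ℝ × ℝ → ℝ) (m ε x : ℝ) : ℝ → ℝ := fun s =>
  u (x, s) - m * (Real.sin x ^ 2 + Real.sin s ^ 2)
    + ε * ((Real.sin x ^ 2 + Real.sin s ^ 2) ^ 2
        - 3 * ((Real.sin x ^ 2 + Real.sin s ^ 2) * (Real.sin x * Real.sin s)))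

noncomputable def FXfun (u : ℝ × ℝ → ℝ) (m ε y : ℝ) : ℝ → ℝ := fun t =>
  fderiv ℝ u (t, y) (1, 0) - m * (2 * Real.sin t * Real.cos t)
    + ε * (4 * Real.sin t * Real.cos t * (Real.sin t ^ 2 + Real.sin y ^ 2)
        - 3 * Real.sin y * Real.cos t * (3 * Real.sin t ^ 2 + Real.sin y ^ 2))

noncomputable def FYfun (u : ℝ × ℝ → ℝ) (m ε x : ℝ) : ℝ → ℝ := fun t =>
  fderiv ℝ u (x, t) (0, 1) - m * (2 * Real.sin t * Real.cos t)
    + ε * (4 * Real.sin t * Real.cos t * (Real.sin t ^ 2 + Real.sin x ^ 2)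
        - 3 * Real.sin x * Real.cos t * (3 * Real.sin t ^ 2 + Real.sin x ^ 2))

lemma GX_hasDerivAt {u : ℝ × ℝ → ℝ} (m ε : ℝ) {t y : ℝ}
    (hu : DifferentiableAt ℝ u (t, y)) :
    HasDerivAt (GXfun u m ε y) (FXfun u m ε y t) t :=
  ((sliceX_hasDerivAt hu).sub ((u0X_hasDeriv (Real.sin y ^ 2) t).const_mul m)).add
    ((HX_hasDeriv (Real.sin y ^ 2) (Real.sin y) t).const_mul ε)

lemma GY_hasDerivAt {u : ℝ × ℝ → ℝ} (m ε : ℝ) {x t : ℝ}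
    (hu : DifferentiableAt ℝ u (x, t)) :
    HasDerivAt (GYfun u m ε x) (FYfun u m ε x t) t :=
  ((sliceY_hasDerivAt hu).sub ((u0Y_hasDeriv (Real.sin x ^ 2) t).const_mul m)).add
    ((HY_hasDeriv (Real.sin x ^ 2) (Real.sin x) t).const_mul ε)

lemma FX_hasDerivAt {u : ℝ × ℝ → ℝ} (m ε : ℝ) {x y : ℝ}
    (hC2 : ContDiffAt ℝ 2 u (x, y)) :
    HasDerivAt (FXfun u m ε y)
      (deriv (fun t => fderiv ℝ u (t, y) (1, 0)) x - m * (2 * (Real.cos x ^ 2 - Real.sin x ^ 2))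
        + ε * (4 * (Real.cos x ^ 2 - Real.sin x ^ 2) * (Real.sin x ^ 2 + Real.sin y ^ 2)
            + 8 * Real.sin x ^ 2 * Real.cos x ^ 2
            + 3 * Real.sin y * Real.sin x * (3 * Real.sin x ^ 2 + Real.sin y ^ 2)
            - 18 * Real.sin y * Real.sin x * Real.cos x ^ 2)) x :=
  (((fderiv_slice_diffX hC2).hasDerivAt).sub ((u0X'_hasDeriv x).const_mul m)).add
    ((HX'_hasDeriv (Real.sin y ^ 2) (Real.sin y) x).const_mul ε)

lemma FY_hasDerivAt {u : ℝ × ℝ → ℝ} (m ε : ℝ) {x y : ℝ}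
    (hC2 : ContDiffAt ℝ 2 u (x, y)) :
    HasDerivAt (FYfun u m ε x)
      (deriv (fun t => fderiv ℝ u (x, t) (0, 1)) y - m * (2 * (Real.cos y ^ 2 - Real.sin y ^ 2))
        + ε * (4 * (Real.cos y ^ 2 - Real.sin y ^ 2) * (Real.sin y ^ 2 + Real.sin x ^ 2)
            + 8 * Real.sin y ^ 2 * Real.cos y ^ 2
            + 3 * Real.sin x * Real.sin y * (3 * Real.sin y ^ 2 + Real.sin x ^ 2)
            - 18 * Real.sin x * Real.sin y * Real.cos y ^ 2)) y :=
  (((fderiv_slice_diffY hC2).hasDerivAt).sub ((u0X'_hasDeriv y).const_mul m)).add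
    ((HX'_hasDeriv (Real.sin x ^ 2) (Real.sin x) y).const_mul ε)

/-! ### Interior maximum is impossible -/

set_option maxHeartbeats 2000000 in
lemma interior_case_false (u v : ℝ × ℝ → ℝ)
    (hreg : ContDiffOn ℝ 2 u (Ioo (0:ℝ) π ×ˢ Ioo (0:ℝ) π))
    (heq : ∀ p ∈ Ioo (0:ℝ) π ×ˢ Ioo (0:ℝ) π,
      -(1 / 2) * lap u p
        + (1 / (2 * (Real.sin p.1 * Real.sin p.2))) *
          (pdX (fun q => Real.sin q.1 * Real.sin q.2) p * pdX u p
            + pdY (fun q => Real.sin q.1 * Real.sin q.2) p * pdY u p)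
      = u p)
    (hvio : ∀ p ∈ Ioo (0:ℝ) π ×ˢ Ioo (0:ℝ) π,
        v p = u p / (Real.sin p.1 ^ 2 + Real.sin p.2 ^ 2))
    (m ε : ℝ) (hε : 0 < ε) (p₀ : ℝ × ℝ) (hin : p₀ ∈ Ioo (0:ℝ) π ×ˢ Ioo (0:ℝ) π)
    (hle : ∀ p ∈ Ioo (0:ℝ) π ×ˢ Ioo (0:ℝ) π,
      v p + ε * (Real.sin p.1 ^ 2 + Real.sin p.2 ^ 2 - 3 * (Real.sin p.1 * Real.sin p.2)) ≤ m)
    (hm : v p₀ + ε * (Real.sin p₀.1 ^ 2 + Real.sin p₀.2 ^ 2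
        - 3 * (Real.sin p₀.1 * Real.sin p₀.2)) = m) :
    False := by
  have hS : IsOpen (Ioo (0:ℝ) π ×ˢ Ioo (0:ℝ) π) := isOpen_Ioo.prod isOpen_Ioo
  have hsx : 0 < Real.sin p₀.1 := Real.sin_pos_of_pos_of_lt_pi hin.1.1 hin.1.2
  have hsy : 0 < Real.sin p₀.2 := Real.sin_pos_of_pos_of_lt_pi hin.2.1 hin.2.2
  have hsx1 : Real.sin p₀.1 ≤ 1 := Real.sin_le_one _
  have hsy1 : Real.sin p₀.2 ≤ 1 := Real.sin_le_one _
  -- u = u₀ * v on the open square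
  have hu_eq : ∀ p ∈ Ioo (0:ℝ) π ×ˢ Ioo (0:ℝ) π,
      u p = (Real.sin p.1 ^ 2 + Real.sin p.2 ^ 2) * v p := by
    intro p hp
    have h0 : 0 < Real.sin p.1 ^ 2 + Real.sin p.2 ^ 2 := by
      have := Real.sin_pos_of_pos_of_lt_pi hp.1.1 hp.1.2
      positivity
    rw [hvio p hp]
    field_simp
  -- the comparison function is ≤ 0 on the open square
  have hGle : ∀ p ∈ Ioo (0:ℝ) π ×ˢ Ioo (0:ℝ) π,
      u p - m * (Real.sin p.1 ^ 2 + Real.sin p.2 ^ 2)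
        + ε * ((Real.sin p.1 ^ 2 + Real.sin p.2 ^ 2) ^ 2
            - 3 * ((Real.sin p.1 ^ 2 + Real.sin p.2 ^ 2) * (Real.sin p.1 * Real.sin p.2))) ≤ 0 := by
    intro p hp
    have h0 : 0 ≤ Real.sin p.1 ^ 2 + Real.sin p.2 ^ 2 := by positivity
    have h1 := hle p hp
    have h2 := hu_eq p hp
    have h3 : u p - m * (Real.sin p.1 ^ 2 + Real.sin p.2 ^ 2)
        + ε * ((Real.sin p.1 ^ 2 + Real.sin p.2 ^ 2) ^ 2
            - 3 * ((Real.sin p.1 ^ 2 + Real.sin p.2 ^ 2) * (Real.sin p.1 * Real.sin p.2)))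
        = (Real.sin p.1 ^ 2 + Real.sin p.2 ^ 2)
          * (v p + ε * (Real.sin p.1 ^ 2 + Real.sin p.2 ^ 2
              - 3 * (Real.sin p.1 * Real.sin p.2)) - m) := by
      rw [h2]; ring
    rw [h3]
    exact mul_nonpos_of_nonneg_of_nonpos h0 (by linarith)
  have hG0 : u p₀ - m * (Real.sin p₀.1 ^ 2 + Real.sin p₀.2 ^ 2)
        + ε * ((Real.sin p₀.1 ^ 2 + Real.sin p₀.2 ^ 2) ^ 2
            - 3 * ((Real.sin p₀.1 ^ 2 + Real.sin p₀.2 ^ 2) * (Real.sin p₀.1 * Real.sin p₀.2)))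
      = 0 := by
    have h2 := hu_eq p₀ hin
    rw [h2, ← hm]; ring
  -- value of u at p₀
  have hupval : u p₀ = m * (Real.sin p₀.1 ^ 2 + Real.sin p₀.2 ^ 2)
      - ε * ((Real.sin p₀.1 ^ 2 + Real.sin p₀.2 ^ 2) ^ 2
          - 3 * ((Real.sin p₀.1 ^ 2 + Real.sin p₀.2 ^ 2) * (Real.sin p₀.1 * Real.sin p₀.2))) := by
    linarith [hG0]
  have hC2 : ContDiffAt ℝ 2 u p₀ := hreg.contDiffAt (hS.mem_nhds hin)
  have hu_p₀ : DifferentiableAt ℝ u p₀ := hC2.differentiableAt (by norm_num)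
  -- neighbourhood sets for the two slices
  have hNXopen : IsOpen {t : ℝ | (t, p₀.2) ∈ Ioo (0:ℝ) π ×ˢ Ioo (0:ℝ) π} :=
    hS.preimage (continuous_id.prodMk continuous_const)
  have hNXmem : p₀.1 ∈ {t : ℝ | (t, p₀.2) ∈ Ioo (0:ℝ) π ×ˢ Ioo (0:ℝ) π} := hin
  have hNYopen : IsOpen {t : ℝ | (p₀.1, t) ∈ Ioo (0:ℝ) π ×ˢ Ioo (0:ℝ) π} :=
    hS.preimage (continuous_const.prodMk continuous_id)
  have hNYmem : p₀.2 ∈ {t : ℝ | (p₀.1, t) ∈ Ioo (0:ℝ) π ×ˢ Ioo (0:ℝ) π} := hin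
  -- local max of the x-slice
  have hlocX : IsLocalMax (GXfun u m ε p₀.2) p₀.1 := by
    filter_upwards [hNXopen.mem_nhds hNXmem] with t ht
    have h1 : GXfun u m ε p₀.2 t ≤ 0 := hGle (t, p₀.2) ht
    have h2 : GXfun u m ε p₀.2 p₀.1 = 0 := hG0
    rw [h2]; exact h1
  have hlocY : IsLocalMax (GYfun u m ε p₀.1) p₀.2 := by
    filter_upwards [hNYopen.mem_nhds hNYmem] with t ht
    have h1 : GYfun u m ε p₀.1 t ≤ 0 := hGle (p₀.1, t) ht
    have h2 : GYfun u m ε p₀.1 p₀.2 = 0 := hG0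
    rw [h2]; exact h1
  -- eventual HasDerivAt for the slices
  have hevGX : ∀ᶠ t in 𝓝 p₀.1, HasDerivAt (GXfun u m ε p₀.2) (FXfun u m ε p₀.2 t) t := by
    filter_upwards [hNXopen.mem_nhds hNXmem] with t ht
    exact GX_hasDerivAt m ε ((hreg.contDiffAt (hS.mem_nhds ht)).differentiableAt (by norm_num))
  have hevGY : ∀ᶠ t in 𝓝 p₀.2, HasDerivAt (GYfun u m ε p₀.1) (FYfun u m ε p₀.1 t) t := by
    filter_upwards [hNYopen.mem_nhds hNYmem] with t ht
    exact GY_hasDerivAt m ε ((hreg.contDiffAt (hS.mem_nhds ht)).differentiableAt (by norm_num))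
  -- first-order conditions
  have hpdX : pdX u p₀ = fderiv ℝ u (p₀.1, p₀.2) (1, 0) := (sliceX_hasDerivAt hu_p₀).deriv
  have hpdY : pdY u p₀ = fderiv ℝ u (p₀.1, p₀.2) (0, 1) := (sliceY_hasDerivAt hu_p₀).deriv
  have hA1 : pdX u p₀ - m * (2 * Real.sin p₀.1 * Real.cos p₀.1)
      + ε * (4 * Real.sin p₀.1 * Real.cos p₀.1 * (Real.sin p₀.1 ^ 2 + Real.sin p₀.2 ^ 2)
          - 3 * Real.sin p₀.2 * Real.cos p₀.1 * (3 * Real.sin p₀.1 ^ 2 + Real.sin p₀.2 ^ 2))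
      = 0 := by
    have h01 : deriv (GXfun u m ε p₀.2) p₀.1 = 0 := hlocX.deriv_eq_zero
    have h02 : deriv (GXfun u m ε p₀.2) p₀.1 = FXfun u m ε p₀.2 p₀.1 :=
      (GX_hasDerivAt m ε hu_p₀).deriv
    have h03 : FXfun u m ε p₀.2 p₀.1
        = fderiv ℝ u (p₀.1, p₀.2) (1, 0) - m * (2 * Real.sin p₀.1 * Real.cos p₀.1)
          + ε * (4 * Real.sin p₀.1 * Real.cos p₀.1 * (Real.sin p₀.1 ^ 2 + Real.sin p₀.2 ^ 2)
              - 3 * Real.sin p₀.2 * Real.cos p₀.1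
                * (3 * Real.sin p₀.1 ^ 2 + Real.sin p₀.2 ^ 2)) := rfl
    rw [hpdX]
    rw [h03] at h02
    linarith
  have hA2 : pdY u p₀ - m * (2 * Real.sin p₀.2 * Real.cos p₀.2)
      + ε * (4 * Real.sin p₀.2 * Real.cos p₀.2 * (Real.sin p₀.2 ^ 2 + Real.sin p₀.1 ^ 2)
          - 3 * Real.sin p₀.1 * Real.cos p₀.2 * (3 * Real.sin p₀.2 ^ 2 + Real.sin p₀.1 ^ 2))
      = 0 := by
    have h01 : deriv (GYfun u m ε p₀.1) p₀.2 = 0 := hlocY.deriv_eq_zero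
    have h02 : deriv (GYfun u m ε p₀.1) p₀.2 = FYfun u m ε p₀.1 p₀.2 :=
      (GY_hasDerivAt m ε hu_p₀).deriv
    have h03 : FYfun u m ε p₀.1 p₀.2
        = fderiv ℝ u (p₀.1, p₀.2) (0, 1) - m * (2 * Real.sin p₀.2 * Real.cos p₀.2)
          + ε * (4 * Real.sin p₀.2 * Real.cos p₀.2 * (Real.sin p₀.2 ^ 2 + Real.sin p₀.1 ^ 2)
              - 3 * Real.sin p₀.1 * Real.cos p₀.2
                * (3 * Real.sin p₀.2 ^ 2 + Real.sin p₀.1 ^ 2)) := rfl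
    rw [hpdY]
    rw [h03] at h02
    linarith
  -- second-order conditions
  have hevdX : deriv (GXfun u m ε p₀.2) =ᶠ[𝓝 p₀.1] FXfun u m ε p₀.2 :=
    hevGX.mono fun t h => h.deriv
  have hevdY : deriv (GYfun u m ε p₀.1) =ᶠ[𝓝 p₀.2] FYfun u m ε p₀.1 :=
    hevGY.mono fun t h => h.deriv
  have hFX := FX_hasDerivAt (u := u) m ε (x := p₀.1) (y := p₀.2) hC2
  have hFY := FY_hasDerivAt (u := u) m ε (x := p₀.1) (y := p₀.2) hC2
  have hsecX : deriv (deriv (GXfun u m ε p₀.2)) p₀.1 ≤ 0 :=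
    second_deriv_nonpos_of_isLocalMax hlocX (hevGX.mono fun t h => h.differentiableAt)
      (hFX.differentiableAt.congr_of_eventuallyEq hevdX)
  have hsecY : deriv (deriv (GYfun u m ε p₀.1)) p₀.2 ≤ 0 :=
    second_deriv_nonpos_of_isLocalMax hlocY (hevGY.mono fun t h => h.differentiableAt)
      (hFY.differentiableAt.congr_of_eventuallyEq hevdY)
  -- identify second derivatives with pdX pdX u etc.
  have hev1X : (fun t => pdX u (t, p₀.2)) =ᶠ[𝓝 p₀.1] (fun t => fderiv ℝ u (t, p₀.2) (1, 0)) := by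
    filter_upwards [hNXopen.mem_nhds hNXmem] with t ht
    exact (sliceX_hasDerivAt ((hreg.contDiffAt (hS.mem_nhds ht)).differentiableAt
      (by norm_num))).deriv
  have hev1Y : (fun t => pdY u (p₀.1, t)) =ᶠ[𝓝 p₀.2] (fun t => fderiv ℝ u (p₀.1, t) (0, 1)) := by
    filter_upwards [hNYopen.mem_nhds hNYmem] with t ht
    exact (sliceY_hasDerivAt ((hreg.contDiffAt (hS.mem_nhds ht)).differentiableAt
      (by norm_num))).deriv
  have hpdXX : pdX (pdX u) p₀ = deriv (fun t => fderiv ℝ u (t, p₀.2) (1, 0)) p₀.1 :=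
    hev1X.deriv_eq
  have hpdYY : pdY (pdY u) p₀ = deriv (fun t => fderiv ℝ u (p₀.1, t) (0, 1)) p₀.2 :=
    hev1Y.deriv_eq
  have hB1 : pdX (pdX u) p₀ - m * (2 * (Real.cos p₀.1 ^ 2 - Real.sin p₀.1 ^ 2))
      + ε * (4 * (Real.cos p₀.1 ^ 2 - Real.sin p₀.1 ^ 2)
            * (Real.sin p₀.1 ^ 2 + Real.sin p₀.2 ^ 2)
          + 8 * Real.sin p₀.1 ^ 2 * Real.cos p₀.1 ^ 2
          + 3 * Real.sin p₀.2 * Real.sin p₀.1 * (3 * Real.sin p₀.1 ^ 2 + Real.sin p₀.2 ^ 2)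
          - 18 * Real.sin p₀.2 * Real.sin p₀.1 * Real.cos p₀.1 ^ 2) ≤ 0 := by
    have h1 : deriv (deriv (GXfun u m ε p₀.2)) p₀.1 = deriv (FXfun u m ε p₀.2) p₀.1 :=
      hevdX.deriv_eq
    have h2 := hFX.deriv
    rw [hpdXX]
    linarith
  have hB2 : pdY (pdY u) p₀ - m * (2 * (Real.cos p₀.2 ^ 2 - Real.sin p₀.2 ^ 2))
      + ε * (4 * (Real.cos p₀.2 ^ 2 - Real.sin p₀.2 ^ 2)
            * (Real.sin p₀.2 ^ 2 + Real.sin p₀.1 ^ 2)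
          + 8 * Real.sin p₀.2 ^ 2 * Real.cos p₀.2 ^ 2
          + 3 * Real.sin p₀.1 * Real.sin p₀.2 * (3 * Real.sin p₀.2 ^ 2 + Real.sin p₀.1 ^ 2)
          - 18 * Real.sin p₀.1 * Real.sin p₀.2 * Real.cos p₀.2 ^ 2) ≤ 0 := by
    have h1 : deriv (deriv (GYfun u m ε p₀.1)) p₀.2 = deriv (FYfun u m ε p₀.1) p₀.2 :=
      hevdY.deriv_eq
    have h2 := hFY.deriv
    rw [hpdYY]
    linarith
  -- the PDE at p₀
  have h := heq p₀ hin
  have hphiX : pdX (fun q => Real.sin q.1 * Real.sin q.2) p₀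
      = Real.cos p₀.1 * Real.sin p₀.2 :=
    ((Real.hasDerivAt_sin p₀.1).mul_const (Real.sin p₀.2)).deriv
  have hphiY : pdY (fun q => Real.sin q.1 * Real.sin q.2) p₀
      = Real.sin p₀.1 * Real.cos p₀.2 :=
    ((Real.hasDerivAt_sin p₀.2).const_mul (Real.sin p₀.1)).deriv
  rw [hphiX, hphiY] at h
  simp only [lap] at h
  have hsxy : 0 < Real.sin p₀.1 * Real.sin p₀.2 := mul_pos hsx hsy
  have hne : (2 * (Real.sin p₀.1 * Real.sin p₀.2)) ≠ 0 := by positivity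
  -- clear the denominator in the PDE
  have hclear : -(Real.sin p₀.1 * Real.sin p₀.2) * (pdX (pdX u) p₀ + pdY (pdY u) p₀)
      + (Real.cos p₀.1 * Real.sin p₀.2 * pdX u p₀
          + Real.sin p₀.1 * Real.cos p₀.2 * pdY u p₀)
      = 2 * (Real.sin p₀.1 * Real.sin p₀.2) * u p₀ := by
    field_simp at h
    linarith
  -- multiplied versions of the first-order conditions
  have hA1' : Real.cos p₀.1 * Real.sin p₀.2 * (pdX u p₀
      - m * (2 * Real.sin p₀.1 * Real.cos p₀.1)
      + ε * (4 * Real.sin p₀.1 * Real.cos p₀.1 * (Real.sin p₀.1 ^ 2 + Real.sin p₀.2 ^ 2)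
          - 3 * Real.sin p₀.2 * Real.cos p₀.1 * (3 * Real.sin p₀.1 ^ 2 + Real.sin p₀.2 ^ 2)))
      = 0 := by rw [hA1, mul_zero]
  have hA2' : Real.sin p₀.1 * Real.cos p₀.2 * (pdY u p₀
      - m * (2 * Real.sin p₀.2 * Real.cos p₀.2)
      + ε * (4 * Real.sin p₀.2 * Real.cos p₀.2 * (Real.sin p₀.2 ^ 2 + Real.sin p₀.1 ^ 2)
          - 3 * Real.sin p₀.1 * Real.cos p₀.2 * (3 * Real.sin p₀.2 ^ 2 + Real.sin p₀.1 ^ 2)))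
      = 0 := by rw [hA2, mul_zero]
  have hB1' : (Real.sin p₀.1 * Real.sin p₀.2) * (pdX (pdX u) p₀
      - m * (2 * (Real.cos p₀.1 ^ 2 - Real.sin p₀.1 ^ 2))
      + ε * (4 * (Real.cos p₀.1 ^ 2 - Real.sin p₀.1 ^ 2)
            * (Real.sin p₀.1 ^ 2 + Real.sin p₀.2 ^ 2)
          + 8 * Real.sin p₀.1 ^ 2 * Real.cos p₀.1 ^ 2
          + 3 * Real.sin p₀.2 * Real.sin p₀.1 * (3 * Real.sin p₀.1 ^ 2 + Real.sin p₀.2 ^ 2)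
          - 18 * Real.sin p₀.2 * Real.sin p₀.1 * Real.cos p₀.1 ^ 2)) ≤ 0 :=
    mul_nonpos_of_nonneg_of_nonpos hsxy.le hB1
  have hB2' : (Real.sin p₀.1 * Real.sin p₀.2) * (pdY (pdY u) p₀
      - m * (2 * (Real.cos p₀.2 ^ 2 - Real.sin p₀.2 ^ 2))
      + ε * (4 * (Real.cos p₀.2 ^ 2 - Real.sin p₀.2 ^ 2)
            * (Real.sin p₀.2 ^ 2 + Real.sin p₀.1 ^ 2)
          + 8 * Real.sin p₀.2 ^ 2 * Real.cos p₀.2 ^ 2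
          + 3 * Real.sin p₀.1 * Real.sin p₀.2 * (3 * Real.sin p₀.2 ^ 2 + Real.sin p₀.1 ^ 2)
          - 18 * Real.sin p₀.1 * Real.sin p₀.2 * Real.cos p₀.2 ^ 2)) ≤ 0 :=
    mul_nonpos_of_nonneg_of_nonpos hsxy.le hB2
  have hup' : 2 * (Real.sin p₀.1 * Real.sin p₀.2) * u p₀
      = 2 * (Real.sin p₀.1 * Real.sin p₀.2)
        * (m * (Real.sin p₀.1 ^ 2 + Real.sin p₀.2 ^ 2)
          - ε * ((Real.sin p₀.1 ^ 2 + Real.sin p₀.2 ^ 2) ^ 2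
              - 3 * ((Real.sin p₀.1 ^ 2 + Real.sin p₀.2 ^ 2)
                * (Real.sin p₀.1 * Real.sin p₀.2)))) := by rw [hupval]
  have hW := keyIneq (Real.sin p₀.1) (Real.cos p₀.1) (Real.sin p₀.2) (Real.cos p₀.2)
    hsx hsy hsx1 hsy1 (Real.sin_sq_add_cos_sq p₀.1) (Real.sin_sq_add_cos_sq p₀.2)
  have hWε := mul_pos hε hW
  nlinarith [hclear, hA1', hA2', hB1', hB2', hup', hWε]

/-! ### Main nonpositivity lemma -/

set_option maxHeartbeats 1000000 in
lemma main_nonpos (u v : ℝ × ℝ → ℝ)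
    (hreg : ContDiffOn ℝ 2 u (Ioo (0:ℝ) π ×ˢ Ioo (0:ℝ) π))
    (heq : ∀ p ∈ Ioo (0:ℝ) π ×ˢ Ioo (0:ℝ) π,
      -(1 / 2) * lap u p
        + (1 / (2 * (Real.sin p.1 * Real.sin p.2))) *
          (pdX (fun q => Real.sin q.1 * Real.sin q.2) p * pdX u p
            + pdY (fun q => Real.sin q.1 * Real.sin q.2) p * pdY u p)
      = u p)
    (hv : ContinuousOn v (Icc (0:ℝ) π ×ˢ Icc (0:ℝ) π))
    (hvio : ∀ p ∈ Ioo (0:ℝ) π ×ˢ Ioo (0:ℝ) π,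
        v p = u p / (Real.sin p.1 ^ 2 + Real.sin p.2 ^ 2))
    (hvfr : ∀ p ∈ frontier (Icc (0:ℝ) π ×ˢ Icc (0:ℝ) π), v p = 0) :
    ∀ q ∈ Ioo (0:ℝ) π ×ˢ Ioo (0:ℝ) π, u q ≤ 0 := by
  have hsub : Ioo (0:ℝ) π ×ˢ Ioo (0:ℝ) π ⊆ Icc (0:ℝ) π ×ˢ Icc (0:ℝ) π :=
    prod_mono Ioo_subset_Icc_self Ioo_subset_Icc_self
  have hK : IsCompact (Icc (0:ℝ) π ×ˢ Icc (0:ℝ) π) := isCompact_Icc.prod isCompact_Icc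
  have hKne : (Icc (0:ℝ) π ×ˢ Icc (0:ℝ) π).Nonempty :=
    ⟨(0, 0), ⟨⟨le_refl 0, Real.pi_pos.le⟩, ⟨le_refl 0, Real.pi_pos.le⟩⟩⟩
  -- main bound
  have step1 : ∀ ε : ℝ, 0 < ε → ∀ q ∈ Ioo (0:ℝ) π ×ˢ Ioo (0:ℝ) π, v q ≤ 5 * ε := by
    intro ε hε q hq
    have hwc : ContinuousOn (fun p : ℝ × ℝ => v p
        + ε * (Real.sin p.1 ^ 2 + Real.sin p.2 ^ 2 - 3 * (Real.sin p.1 * Real.sin p.2)))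
        (Icc (0:ℝ) π ×ˢ Icc (0:ℝ) π) := by
      apply hv.add
      apply Continuous.continuousOn
      exact continuous_const.mul
        ((((Real.continuous_sin.comp continuous_fst).pow 2).add
          ((Real.continuous_sin.comp continuous_snd).pow 2)).sub
          (continuous_const.mul ((Real.continuous_sin.comp continuous_fst).mul
            (Real.continuous_sin.comp continuous_snd))))
    obtain ⟨p₀, hp₀K, hmax⟩ := hK.exists_isMaxOn hKne hwc
    by_cases hin : p₀ ∈ Ioo (0:ℝ) π ×ˢ Ioo (0:ℝ) π
    · exact (interior_case_false u v hreg heq hvio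
        (v p₀ + ε * (Real.sin p₀.1 ^ 2 + Real.sin p₀.2 ^ 2
          - 3 * (Real.sin p₀.1 * Real.sin p₀.2))) ε hε p₀ hin
        (fun p hp => hmax (hsub hp)) rfl).elim
    · have hfr : p₀ ∈ frontier (Icc (0:ℝ) π ×ˢ Icc (0:ℝ) π) := by
        rw [(isClosed_Icc.prod isClosed_Icc).frontier_eq]
        refine ⟨hp₀K, ?_⟩
        rw [interior_prod_eq, interior_Icc]
        exact hin

      have hv0 : v p₀ = 0 := hvfr p₀ hfr
      have h1 := hmax (hsub hq)
      have hs1 : 0 ≤ Real.sin p₀.1 := Real.sin_nonneg_of_nonneg_of_le_pi hp₀K.1.1 hp₀K.1.2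
      have hs2 : 0 ≤ Real.sin p₀.2 := Real.sin_nonneg_of_nonneg_of_le_pi hp₀K.2.1 hp₀K.2.2
      have hs1' : Real.sin p₀.1 ≤ 1 := Real.sin_le_one _
      have hs2' : Real.sin p₀.2 ≤ 1 := Real.sin_le_one _
      have hq1 : 0 ≤ Real.sin q.1 := Real.sin_nonneg_of_nonneg_of_le_pi (hsub hq).1.1 (hsub hq).1.2
      have hq2 : 0 ≤ Real.sin q.2 := Real.sin_nonneg_of_nonneg_of_le_pi (hsub hq).2.1 (hsub hq).2.2
      have hq1' : Real.sin q.1 ≤ 1 := Real.sin_le_one _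
      have hq2' : Real.sin q.2 ≤ 1 := Real.sin_le_one _
      have hb1 : Real.sin p₀.1 ^ 2 + Real.sin p₀.2 ^ 2
          - 3 * (Real.sin p₀.1 * Real.sin p₀.2) ≤ 2 := by nlinarith
      have hb2 : -3 ≤ Real.sin q.1 ^ 2 + Real.sin q.2 ^ 2
          - 3 * (Real.sin q.1 * Real.sin q.2) := by nlinarith
      have e1 : ε * (Real.sin p₀.1 ^ 2 + Real.sin p₀.2 ^ 2
          - 3 * (Real.sin p₀.1 * Real.sin p₀.2)) ≤ ε * 2 :=
        mul_le_mul_of_nonneg_left hb1 hε.le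
      have e2 : ε * (-3) ≤ ε * (Real.sin q.1 ^ 2 + Real.sin q.2 ^ 2
          - 3 * (Real.sin q.1 * Real.sin q.2)) :=
        mul_le_mul_of_nonneg_left hb2 hε.le
      have h1' : v q + ε * (Real.sin q.1 ^ 2 + Real.sin q.2 ^ 2
          - 3 * (Real.sin q.1 * Real.sin q.2))
          ≤ v p₀ + ε * (Real.sin p₀.1 ^ 2 + Real.sin p₀.2 ^ 2
          - 3 * (Real.sin p₀.1 * Real.sin p₀.2)) := h1
      rw [hv0] at h1'
      linarith
  intro q hq
  have hv0 : v q ≤ 0 := by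
    by_contra hpos
    push_neg at hpos
    have := step1 (v q / 6) (by linarith) q hq
    linarith
  have h0 : 0 < Real.sin q.1 ^ 2 + Real.sin q.2 ^ 2 := by
    have := Real.sin_pos_of_pos_of_lt_pi hq.1.1 hq.1.2
    positivity
  have hval : u q = (Real.sin q.1 ^ 2 + Real.sin q.2 ^ 2) * v q := by
    rw [hvio q hq]; field_simp
  rw [hval]
  exact mul_nonpos_of_nonneg_of_nonpos h0.le hv0

/-! ### Negation lemmas for the operator -/

lemma pdX_neg (f : ℝ × ℝ → ℝ) (p : ℝ × ℝ) : pdX (fun q => -f q) p = -pdX f p := by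
  simp only [pdX]
  exact deriv.neg

lemma pdY_neg (f : ℝ × ℝ → ℝ) (p : ℝ × ℝ) : pdY (fun q => -f q) p = -pdY f p := by
  simp only [pdY]
  exact deriv.neg

lemma pdX_neg_fun (f : ℝ × ℝ → ℝ) : pdX (fun q => -f q) = fun p => -pdX f p :=
  funext (pdX_neg f)

lemma pdY_neg_fun (f : ℝ × ℝ → ℝ) : pdY (fun q => -f q) = fun p => -pdY f p :=
  funext (pdY_neg f)

lemma lap_neg (f : ℝ × ℝ → ℝ) (p : ℝ × ℝ) : lap (fun q => -f q) p = -lap f p := by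
  simp only [lap]
  rw [pdX_neg_fun, pdY_neg_fun, pdX_neg, pdY_neg]
  ring

/-- Uniqueness for the linear elliptic equation satisfied by the orbit-metric entries
on the flat square: with `φ(x,y) = sin x sin y` and `u₀(x,y) = sin²x + sin²y`, any
solution `u` of `−(1/2)Δu + (1/(2φ))⟨∇φ, ∇u⟩ = u` on the open square, vanishing on
the boundary and with `u/u₀` extending continuously by `0` to the boundary, vanishes
identically on the closed square. -/
theorem stmt11 (u : ℝ × ℝ → ℝ)
    (hcont : ContinuousOn u (Icc (0:ℝ) π ×ˢ Icc (0:ℝ) π))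
    (hreg : ContDiffOn ℝ 2 u (Ioo (0:ℝ) π ×ˢ Ioo (0:ℝ) π))
    (heq : ∀ p ∈ Ioo (0:ℝ) π ×ˢ Ioo (0:ℝ) π,
      -(1 / 2) * lap u p
        + (1 / (2 * (Real.sin p.1 * Real.sin p.2))) *
          (pdX (fun q => Real.sin q.1 * Real.sin q.2) p * pdX u p
            + pdY (fun q => Real.sin q.1 * Real.sin q.2) p * pdY u p)
      = u p)
    (hbdry : ∀ p ∈ frontier (Icc (0:ℝ) π ×ˢ Icc (0:ℝ) π), u p = 0)
    (hquot : ∃ v : ℝ × ℝ → ℝ,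
      ContinuousOn v (Icc (0:ℝ) π ×ˢ Icc (0:ℝ) π) ∧
      (∀ p ∈ Ioo (0:ℝ) π ×ˢ Ioo (0:ℝ) π,
        v p = u p / (Real.sin p.1 ^ 2 + Real.sin p.2 ^ 2)) ∧
      (∀ p ∈ frontier (Icc (0:ℝ) π ×ˢ Icc (0:ℝ) π), v p = 0)) :
    ∀ p ∈ Icc (0:ℝ) π ×ˢ Icc (0:ℝ) π, u p = 0 := by
  obtain ⟨v, hv, hvio, hvfr⟩ := hquot
  intro p hp
  by_cases hpS : p ∈ Ioo (0:ℝ) π ×ˢ Ioo (0:ℝ) π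
  · -- interior: apply main_nonpos to u and -u
    have h1 : u p ≤ 0 := main_nonpos u v hreg heq hv hvio hvfr p hpS
    have hreg' : ContDiffOn ℝ 2 (fun q => -u q) (Ioo (0:ℝ) π ×ˢ Ioo (0:ℝ) π) := hreg.neg
    have heq' : ∀ q ∈ Ioo (0:ℝ) π ×ˢ Ioo (0:ℝ) π,
        -(1 / 2) * lap (fun r => -u r) q
          + (1 / (2 * (Real.sin q.1 * Real.sin q.2))) *
            (pdX (fun r => Real.sin r.1 * Real.sin r.2) q * pdX (fun r => -u r) q
              + pdY (fun r => Real.sin r.1 * Real.sin r.2) q * pdY (fun r => -u r) q)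
        = -u q := by
      intro q hq
      rw [lap_neg, pdX_neg, pdY_neg]
      have := heq q hq
      ring_nf
      ring_nf at this
      linarith
    have hvio' : ∀ q ∈ Ioo (0:ℝ) π ×ˢ Ioo (0:ℝ) π,
        (fun r => -v r) q = (fun r => -u r) q / (Real.sin q.1 ^ 2 + Real.sin q.2 ^ 2) := by
      intro q hq
      show -v q = -u q / (Real.sin q.1 ^ 2 + Real.sin q.2 ^ 2)
      rw [hvio q hq, neg_div]
    have hvfr' : ∀ q ∈ frontier (Icc (0:ℝ) π ×ˢ Icc (0:ℝ) π), (fun r => -v r) q = 0 := by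
      intro q hq
      simp [hvfr q hq]
    have h2 : -u p ≤ 0 :=
      main_nonpos (fun r => -u r) (fun r => -v r) hreg' heq' hv.neg hvio' hvfr' p hpS
    linarith
  · -- boundary
    apply hbdry
    rw [(isClosed_Icc.prod isClosed_Icc).frontier_eq]
    refine ⟨hp, ?_⟩
    rw [interior_prod_eq, interior_Icc]
    exact hpS
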